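/- Let c ∈ ℝ and let (α_{ij}) be a real symmetric 3×3 matrix. Define R_{ijkl} = c(δ_{ik}δ_{jl} − δ_{il}δ_{jk}) + α_{ik}α_{jl} − α_{il}α_{jk}. Then the determinant of the 3×3 matrix [[R_{1212}−c, R_{1213}, R_{1223}], [R_{1213}, R_{1313}−c, R_{1323}], [R_{1223}, R_{1323}, R_{2323}−c]] is nonnegative (indeed equal to (det A)²). -/

import Mathlib

open Matrix

theorem space_form_obstruction (c : ℝ) (A : Matrix (Fin 3) (Fin 3) ℝ) (hA : A.IsSymm)
    (R : Fin 3 → Fin 3 → Fin 3 → Fin 3 → ℝ)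
    (hR : ∀ i j k l, R i j k l =
      c * ((if i = k then (1 : ℝ) else 0) * (if j = l then (1 : ℝ) else 0)
        - (if i = l then (1 : ℝ) else 0) * (if j = k then (1 : ℝ) else 0))
      + A i k * A j l - A i l * A j k) :
    Matrix.det !![R 0 1 0 1 - c, R 0 1 0 2, R 0 1 1 2;
                  R 0 1 0 2, R 0 2 0 2 - c, R 0 2 1 2;
                  R 0 1 1 2, R 0 2 1 2, R 1 2 1 2 - c] = A.det ^ 2 ∧
    0 ≤ Matrix.det !![R 0 1 0 1 - c, R 0 1 0 2, R 0 1 1 2;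
                      R 0 1 0 2, R 0 2 0 2 - c, R 0 2 1 2;
                      R 0 1 1 2, R 0 2 1 2, R 1 2 1 2 - c] := by
  have h10 : A 1 0 = A 0 1 := by rw [← hA.apply]
  have h20 : A 2 0 = A 0 2 := by rw [← hA.apply]
  have h21 : A 2 1 = A 1 2 := by rw [← hA.apply]
  have key : Matrix.det !![R 0 1 0 1 - c, R 0 1 0 2, R 0 1 1 2;
                  R 0 1 0 2, R 0 2 0 2 - c, R 0 2 1 2;
                  R 0 1 1 2, R 0 2 1 2, R 1 2 1 2 - c] = A.det ^ 2 := by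
    simp only [hR, Matrix.det_fin_three]
    norm_num [Fin.ext_iff, h10, h20, h21]
    simp only [Matrix.cons_val, Matrix.cons_val_one, Matrix.cons_val_two, Matrix.head_cons, Matrix.tail_cons, Matrix.vecHead, Matrix.vecTail, Function.comp_apply, Matrix.cons_val_zero, Matrix.cons_val_succ]
    ring
  exact ⟨key, key ▸ sq_nonneg _⟩
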